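/- Let Φ ∈ ℝ^{m×n}, let y ∈ ℝᵐ with y ≠ 0, let z ∈ ℝⁿ and λ > 0, and define f as below (with C = 0). Then the Jacobian J_f of f is Lipschitz continuous on every bounded open convex set Ω ⊂ ℝⁿ; moreover there exist constants C₁, C₂, C₃ > 0, depending only on Φ, y and Ω (not on λ or z), such that for all x, w ∈ Ω, ‖J_f(x) − J_f(w)‖_F ≤ (C₁‖ΦᵀΦ‖_F + λ(C₂‖z‖₂ + C₃)) ‖x − w‖₂, where ‖·‖_F denotes the Frobenius norm. -/

import Mathlib

open Matrix Finset

private lemma lip_fderiv_aux {n : ℕ}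
    {φ : EuclideanSpace ℝ (Fin n) → EuclideanSpace ℝ (Fin n)}
    (hφ : ContDiff ℝ 2 φ) {Ω : Set (EuclideanSpace ℝ (Fin n))}
    (hbdd : Bornology.IsBounded Ω) (hconv : Convex ℝ Ω) :
    ∃ K : ℝ, 0 ≤ K ∧ ∀ x ∈ Ω, ∀ w ∈ Ω,
      ‖fderiv ℝ φ x - fderiv ℝ φ w‖ ≤ K * ‖x - w‖ := by
  have hD : ContDiff ℝ 1 (fderiv ℝ φ) := hφ.fderiv_right (by norm_num)
  have hD2cont : Continuous (fderiv ℝ (fderiv ℝ φ)) :=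
    (hD.fderiv_right (m := 0) (by norm_num)).continuous
  obtain ⟨K, hK⟩ := hbdd.isCompact_closure.exists_bound_of_continuousOn (f := fderiv ℝ (fderiv ℝ φ))
    (by exact hD2cont.continuousOn)
  refine ⟨max K 0, le_max_right _ _, fun x hx w hw => ?_⟩
  exact Convex.norm_image_sub_le_of_norm_fderiv_le
    (fun u _ => hD.differentiable one_ne_zero u)
    (fun u hu => (hK u (subset_closure hu)).trans (le_max_left _ _)) hconv hw hx

set_option maxHeartbeats 4000000 in
set_option synthInstance.maxHeartbeats 80000 in
/-- For `f(x) = [s(x)ΦᵀΦ + λ r(x) I]x - λ r(x) z - Φᵀy` (with `C = 0`,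
`r(x) = ‖Φx‖² + ‖y‖²`, `s(x) = 2(Φx)ᵀy / r(x)`), the Jacobian `J_f` of `f` is Lipschitz
continuous on every bounded open convex set `Ω ⊂ ℝⁿ`: there exist constants
`C₁, C₂, C₃ > 0` depending only on `Φ`, `y` and `Ω` (not on `λ` or `z`) such that
`‖J_f(x) - J_f(w)‖_F ≤ (C₁‖ΦᵀΦ‖_F + λ(C₂‖z‖ + C₃))‖x - w‖` for all `x, w ∈ Ω`. -/
theorem jacobian_lipschitz {m n : ℕ} (Φ : Matrix (Fin m) (Fin n) ℝ)
    (y : EuclideanSpace ℝ (Fin m)) (hy : y ≠ 0)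
    (Ω : Set (EuclideanSpace ℝ (Fin n))) (hbdd : Bornology.IsBounded Ω)
    (hopen : IsOpen Ω) (hconv : Convex ℝ Ω)
    (r : EuclideanSpace ℝ (Fin n) → ℝ)
    (hr : ∀ x, r x = ‖Matrix.toEuclideanLin Φ x‖ ^ 2 + ‖y‖ ^ 2)
    (s : EuclideanSpace ℝ (Fin n) → ℝ)
    (hs : ∀ x, s x = 1 - ‖Matrix.toEuclideanLin Φ x - y‖ ^ 2 / r x)
    (f : ℝ → EuclideanSpace ℝ (Fin n) → EuclideanSpace ℝ (Fin n) → EuclideanSpace ℝ (Fin n))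
    (hf : ∀ lam z x, f lam z x = s x • Matrix.toEuclideanLin (Φᵀ * Φ) x
        + (lam * r x) • x - (lam * r x) • z - Matrix.toEuclideanLin Φᵀ y)
    (Jf : ℝ → EuclideanSpace ℝ (Fin n) → EuclideanSpace ℝ (Fin n) →
      Matrix (Fin n) (Fin n) ℝ)
    (hJf : ∀ lam z x, Jf lam z x =
      LinearMap.toMatrix (EuclideanSpace.basisFun (Fin n) ℝ).toBasis
        (EuclideanSpace.basisFun (Fin n) ℝ).toBasis (fderiv ℝ (f lam z) x).toLinearMap) :
    ∃ C₁ C₂ C₃ : ℝ, 0 < C₁ ∧ 0 < C₂ ∧ 0 < C₃ ∧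
      ∀ lam : ℝ, 0 < lam → ∀ z : EuclideanSpace ℝ (Fin n), ∀ x ∈ Ω, ∀ w ∈ Ω,
        Real.sqrt (∑ i, ∑ j, (Jf lam z x i j - Jf lam z w i j) ^ 2)
          ≤ (C₁ * Real.sqrt (∑ i, ∑ j, ((Φᵀ * Φ) i j) ^ 2) + lam * (C₂ * ‖z‖ + C₃)) *
              ‖x - w‖ := by
  classical
  set B : EuclideanSpace ℝ (Fin n) →L[ℝ] EuclideanSpace ℝ (Fin m) :=
    LinearMap.toContinuousLinearMap (Matrix.toEuclideanLin Φ) with hBdef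
  set A : EuclideanSpace ℝ (Fin n) →L[ℝ] EuclideanSpace ℝ (Fin n) :=
    LinearMap.toContinuousLinearMap (Matrix.toEuclideanLin (Φᵀ * Φ)) with hAdef
  have hy' : (0:ℝ) < ‖y‖ := norm_pos_iff.mpr hy
  have hrpos : ∀ x, 0 < r x := by
    intro x
    rw [hr]
    nlinarith [pow_pos hy' 2, sq_nonneg ‖Matrix.toEuclideanLin Φ x‖]
  have hrfun : r = fun x => ‖B x‖ ^ 2 + ‖y‖ ^ 2 := funext fun x => by rw [hr]; rfl
  have hsfun : s = fun x => 1 - ‖B x - y‖ ^ 2 / r x := funext fun x => by rw [hs]; rfl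
  have hrC : ContDiff ℝ 2 r := by
    rw [hrfun]
    exact (B.contDiff.norm_sq ℝ).add contDiff_const
  have hsC : ContDiff ℝ 2 s := by
    rw [hsfun]
    exact contDiff_const.sub
      (((B.contDiff.sub contDiff_const).norm_sq ℝ).div hrC fun x => (hrpos x).ne')
  set g₁ : EuclideanSpace ℝ (Fin n) → EuclideanSpace ℝ (Fin n) := fun x => s x • A x
    with hg₁def
  set g₂ : EuclideanSpace ℝ (Fin n) → EuclideanSpace ℝ (Fin n) := fun x => r x • x
    with hg₂def
  have hg₁C : ContDiff ℝ 2 g₁ := hsC.smul A.contDiff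
  have hg₂C : ContDiff ℝ 2 g₂ := hrC.smul contDiff_id
  obtain ⟨K₁, hK₁0, hK₁⟩ := lip_fderiv_aux hg₁C hbdd hconv
  obtain ⟨K₂, hK₂0, hK₂⟩ := lip_fderiv_aux hg₂C hbdd hconv
  set Dr : EuclideanSpace ℝ (Fin n) → (EuclideanSpace ℝ (Fin n) →L[ℝ] ℝ) :=
    fun x => 2 • ((innerSL ℝ (B x)).comp B) with hDrdef
  have hDr : ∀ x, HasFDerivAt r (Dr x) x := by
    intro x
    rw [hrfun]
    exact (B.hasFDerivAt.norm_sq).add_const _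
  have hfd : ∀ (lam : ℝ) (z x : EuclideanSpace ℝ (Fin n)),
      HasFDerivAt (f lam z)
        (fderiv ℝ g₁ x + lam • fderiv ℝ g₂ x - lam • (Dr x).smulRight z) x := by
    intro lam z x
    have hfe : f lam z = fun u => g₁ u + lam • g₂ u - lam • (r u • z)
        - Matrix.toEuclideanLin Φᵀ y := by
      funext u
      simp only [hf, hg₁def, hg₂def, hAdef, LinearMap.coe_toContinuousLinearMap',
        smul_smul]
    rw [hfe]
    exact ((((hg₁C.differentiable (by norm_num) x).hasFDerivAt).add
      (((hg₂C.differentiable (by norm_num) x).hasFDerivAt).const_smul lam)).sub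
      (((hDr x).smul_const z).const_smul lam)).sub_const _
  have hentry : ∀ (lam : ℝ) (z x : EuclideanSpace ℝ (Fin n)) (i j : Fin n),
      Jf lam z x i j = fderiv ℝ (f lam z) x (EuclideanSpace.single j 1) i := by
    intro lam z x i j
    rw [hJf]
    simp [LinearMap.toMatrix_apply, OrthonormalBasis.coe_toBasis_repr_apply,
      EuclideanSpace.basisFun_repr, OrthonormalBasis.coe_toBasis,
      EuclideanSpace.basisFun_apply]
  have hnormsq : ∀ v : EuclideanSpace ℝ (Fin n), ∑ i, v i ^ 2 = ‖v‖ ^ 2 := by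
    intro v
    rw [EuclideanSpace.norm_eq, Real.sq_sqrt (by positivity)]
    simp [Real.norm_eq_abs, sq_abs]
  have hDrLip : ∀ x w : EuclideanSpace ℝ (Fin n), ‖Dr x - Dr w‖ ≤ 2 * ‖B‖ ^ 2 * ‖x - w‖ := by
    intro x w
    refine ContinuousLinearMap.opNorm_le_bound _ (by positivity) fun v => ?_
    have hv : (Dr x - Dr w) v = 2 * (inner ℝ (B (x - w)) (B v) : ℝ) := by
      simp only [hDrdef, ContinuousLinearMap.sub_apply, two_smul,
        ContinuousLinearMap.add_apply, ContinuousLinearMap.comp_apply, innerSL_apply_apply,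
        map_sub, inner_sub_left]
      ring
    rw [hv]
    have h1 : |(inner ℝ (B (x - w)) (B v) : ℝ)| ≤ ‖B (x - w)‖ * ‖B v‖ := abs_real_inner_le_norm _ _
    have h2 : ‖B (x - w)‖ ≤ ‖B‖ * ‖x - w‖ := B.le_opNorm _
    have h3 : ‖B v‖ ≤ ‖B‖ * ‖v‖ := B.le_opNorm _
    rw [Real.norm_eq_abs, abs_mul, abs_two]
    nlinarith [norm_nonneg (B (x - w)), norm_nonneg (B v), norm_nonneg v, norm_nonneg (x - w),
      norm_nonneg B, mul_le_mul h2 h3 (norm_nonneg _) (by positivity)]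
  -- constants
  set N := Real.sqrt (n : ℝ) with hNdef
  have hN0 : 0 ≤ N := Real.sqrt_nonneg _
  set Kb := 2 * ‖B‖ ^ 2 with hKbdef
  have hKb0 : (0:ℝ) ≤ Kb := by positivity
  set Fr := Real.sqrt (∑ i, ∑ j, ((Φᵀ * Φ) i j) ^ 2) with hFrdef
  have hFr0 : 0 ≤ Fr := hFrdef ▸ Real.sqrt_nonneg _
  obtain ⟨C₁, hC₁pos, hC₁⟩ : ∃ C₁ : ℝ, 0 < C₁ ∧ ∀ x ∈ Ω, ∀ w ∈ Ω,
      N * ‖fderiv ℝ g₁ x - fderiv ℝ g₁ w‖ ≤ C₁ * Fr * ‖x - w‖ := by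
    rcases hFr0.eq_or_lt with hF0 | hFpos
    · have hS : (∑ i, ∑ j, ((Φᵀ * Φ) i j) ^ 2) = 0 := by
        have hsq : Real.sqrt (∑ i, ∑ j, ((Φᵀ * Φ) i j) ^ 2) = 0 := by rw [← hFrdef, ← hF0]
        exact (Real.sqrt_eq_zero (by positivity)).mp hsq
      have hM : Φᵀ * Φ = 0 := by
        ext i j
        have h1 := (Finset.sum_eq_zero_iff_of_nonneg
          (fun i _ => Finset.sum_nonneg fun j _ => sq_nonneg ((Φᵀ * Φ) i j))).mp hS i
          (Finset.mem_univ i)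
        have h2 := (Finset.sum_eq_zero_iff_of_nonneg
          (fun j _ => sq_nonneg ((Φᵀ * Φ) i j))).mp h1 j (Finset.mem_univ j)
        have := (pow_eq_zero_iff two_ne_zero).mp h2
        simpa using this
      have hg₁0 : g₁ = fun _ => (0 : EuclideanSpace ℝ (Fin n)) := by
        funext u
        simp [hg₁def, hAdef, hM]
      refine ⟨1, one_pos, fun x hx w hw => ?_⟩
      have hzz : fderiv ℝ g₁ x - fderiv ℝ g₁ w = 0 := by
        rw [hg₁0]
        simp
      rw [hzz, ← hF0]
      simp
    · refine ⟨(N * K₁ + 1) / Fr, by positivity, fun x hx w hw => ?_⟩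
      have h1 : N * ‖fderiv ℝ g₁ x - fderiv ℝ g₁ w‖ ≤ N * (K₁ * ‖x - w‖) :=
        mul_le_mul_of_nonneg_left (hK₁ x hx w hw) hN0
      have h2 : (N * K₁ + 1) / Fr * Fr = N * K₁ + 1 := div_mul_cancel₀ _ hFpos.ne'
      nlinarith [norm_nonneg (x - w)]
  refine ⟨C₁, N * Kb + 1, N * K₂ + 1,
    hC₁pos, by nlinarith [mul_nonneg hN0 hKb0], by nlinarith [mul_nonneg hN0 hK₂0], ?_⟩
  intro lam hlam z x hx w hw
  have hLx : fderiv ℝ (f lam z) x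
      = fderiv ℝ g₁ x + lam • fderiv ℝ g₂ x - lam • (Dr x).smulRight z := (hfd lam z x).fderiv
  have hLw : fderiv ℝ (f lam z) w
      = fderiv ℝ g₁ w + lam • fderiv ℝ g₂ w - lam • (Dr w).smulRight z := (hfd lam z w).fderiv
  set L : EuclideanSpace ℝ (Fin n) →L[ℝ] EuclideanSpace ℝ (Fin n) :=
    fderiv ℝ (f lam z) x - fderiv ℝ (f lam z) w with hLdef
  -- Step 1: Frobenius ≤ √n ⬝ opnorm
  have hstep1 : Real.sqrt (∑ i, ∑ j, (Jf lam z x i j - Jf lam z w i j) ^ 2) ≤ N * ‖L‖ := by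
    have he : ∀ i j, Jf lam z x i j - Jf lam z w i j = L (EuclideanSpace.single j 1) i := by
      intro i j
      rw [hentry, hentry, hLdef]
      simp [ContinuousLinearMap.sub_apply]
    calc Real.sqrt (∑ i, ∑ j, (Jf lam z x i j - Jf lam z w i j) ^ 2)
        = Real.sqrt (∑ j, ‖L (EuclideanSpace.single j 1)‖ ^ 2) := by
          rw [Finset.sum_comm]
          congr 1
          refine Finset.sum_congr rfl fun j _ => ?_
          rw [← hnormsq]
          exact Finset.sum_congr rfl fun i _ => by rw [he]
      _ ≤ Real.sqrt (∑ _j : Fin n, ‖L‖ ^ 2) := by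
          apply Real.sqrt_le_sqrt
          refine Finset.sum_le_sum fun j _ => ?_
          have h := L.le_opNorm (EuclideanSpace.single j 1)
          rw [EuclideanSpace.norm_single, norm_one, mul_one] at h
          exact pow_le_pow_left₀ (norm_nonneg _) h 2
      _ = N * ‖L‖ := by
          rw [Finset.sum_const, Finset.card_univ, Fintype.card_fin, nsmul_eq_mul,
            Real.sqrt_mul (by positivity), Real.sqrt_sq (norm_nonneg _), hNdef]
  -- Step 2: opnorm bound
  have hdiff : L = (fderiv ℝ g₁ x - fderiv ℝ g₁ w) + lam • (fderiv ℝ g₂ x - fderiv ℝ g₂ w)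
      - lam • ((Dr x - Dr w).smulRight z) := by
    have hsr : (Dr x - Dr w).smulRight z = (Dr x).smulRight z - (Dr w).smulRight z := by
      ext v
      simp [ContinuousLinearMap.smulRight_apply, ContinuousLinearMap.sub_apply, sub_smul, sub_mul]
    rw [hLdef, hLx, hLw, hsr, smul_sub, smul_sub]
    abel
  have e1 : N * ‖fderiv ℝ g₁ x - fderiv ℝ g₁ w‖ ≤ C₁ * Fr * ‖x - w‖ := hC₁ x hx w hw
  have e2 : ‖lam • (fderiv ℝ g₂ x - fderiv ℝ g₂ w)‖ ≤ lam * (K₂ * ‖x - w‖) := by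
    rw [norm_smul, Real.norm_eq_abs, abs_of_pos hlam]
    exact mul_le_mul_of_nonneg_left (hK₂ x hx w hw) hlam.le
  have e3 : ‖lam • ((Dr x - Dr w).smulRight z)‖ ≤ lam * (Kb * ‖z‖ * ‖x - w‖) := by
    have hns : ‖lam • ((Dr x - Dr w).smulRight z)‖ = ‖lam‖ * ‖(Dr x - Dr w).smulRight z‖ :=
      norm_smul lam ((Dr x - Dr w).smulRight z)
    rw [hns, Real.norm_eq_abs, abs_of_pos hlam]
    refine mul_le_mul_of_nonneg_left ?_ hlam.le
    calc ‖(Dr x - Dr w).smulRight z‖ = ‖Dr x - Dr w‖ * ‖z‖ :=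
          ContinuousLinearMap.norm_smulRight_apply _ _
      _ ≤ (Kb * ‖x - w‖) * ‖z‖ := by
          refine mul_le_mul_of_nonneg_right ?_ (norm_nonneg z)
          rw [hKbdef]
          exact hDrLip x w
      _ = Kb * ‖z‖ * ‖x - w‖ := by ring
  have hop : ‖L‖ ≤ ‖fderiv ℝ g₁ x - fderiv ℝ g₁ w‖ + lam * (K₂ * ‖x - w‖)
      + lam * (Kb * ‖z‖ * ‖x - w‖) := by
    rw [hdiff]
    calc ‖(fderiv ℝ g₁ x - fderiv ℝ g₁ w) + lam • (fderiv ℝ g₂ x - fderiv ℝ g₂ w)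
          - lam • ((Dr x - Dr w).smulRight z)‖
        ≤ ‖(fderiv ℝ g₁ x - fderiv ℝ g₁ w) + lam • (fderiv ℝ g₂ x - fderiv ℝ g₂ w)‖
          + ‖lam • ((Dr x - Dr w).smulRight z)‖ := norm_sub_le _ _
      _ ≤ (‖fderiv ℝ g₁ x - fderiv ℝ g₁ w‖ + ‖lam • (fderiv ℝ g₂ x - fderiv ℝ g₂ w)‖)
          + ‖lam • ((Dr x - Dr w).smulRight z)‖ := by gcongr; exact norm_add_le _ _
      _ ≤ _ := by linarith [e2, e3]
  refine hstep1.trans ?_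
  have h5 : N * ‖L‖ ≤ N * ‖fderiv ℝ g₁ x - fderiv ℝ g₁ w‖ + N * (lam * (K₂ * ‖x - w‖))
      + N * (lam * (Kb * ‖z‖ * ‖x - w‖)) := by nlinarith [mul_le_mul_of_nonneg_left hop hN0]
  have h6 : N * ‖L‖ ≤ C₁ * Fr * ‖x - w‖ + N * (lam * (K₂ * ‖x - w‖))
      + N * (lam * (Kb * ‖z‖ * ‖x - w‖)) := by linarith
  have hzw := norm_nonneg z
  have hxw := norm_nonneg (x - w)
  nlinarith [h6, mul_nonneg (mul_nonneg hlam.le hzw) hxw, mul_nonneg hlam.le hxw,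
    mul_nonneg hN0 hK₂0, mul_nonneg hN0 hKb0]
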